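/- There exist torsion-free modules whose tensor product has nonzero torsion: over the polynomial ring R = ℂ[z,w], let I = (z², zw) and J = (w², zw) be ideals. Then the element z² ⊗ w² − zw ⊗ zw of I ⊗_R J is nonzero, but z · (z² ⊗ w² − zw ⊗ zw) = 0, so I ⊗_R J is not torsion-free. -/

import Mathlib

open TensorProduct MvPolynomial

noncomputable section Stmt3Aux

abbrev R2 := MvPolynomial (Fin 2) ℂ

def CC : Type := ℂ
instance : CommRing CC := inferInstanceAs (CommRing ℂ)
instance : Module R2 CC := Module.compHom ℂ (constantCoeff : R2 →+* ℂ)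

def CC.of : ℂ → CC := id

lemma CC.smul_def (r : R2) (c : CC) : r • c = CC.of (constantCoeff r) * c := rfl

def zwmon : (Fin 2 →₀ ℕ) := Finsupp.single 0 1 + Finsupp.single 1 1

lemma zw_eq : (X 0 * X 1 : R2) = monomial zwmon 1 := by
  rw [show (X 0 : R2) = X 0 ^ 1 by ring, show (X 1 : R2) = X 1 ^ 1 by ring,
    X_pow_eq_monomial, X_pow_eq_monomial, monomial_mul, mul_one, zwmon]

lemma not_le_zw0 : ¬ zwmon ≤ Finsupp.single 0 2 := by
  intro h; have := h 1; simp [zwmon] at this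

lemma not_le_zw1 : ¬ zwmon ≤ Finsupp.single 1 2 := by
  intro h; have := h 0; simp [zwmon] at this

lemma zwmon_ne0 : zwmon ≠ Finsupp.single 0 2 := fun h => not_le_zw0 (h ▸ le_rfl)
lemma zwmon_ne1 : zwmon ≠ Finsupp.single 1 2 := fun h => not_le_zw1 (h ▸ le_rfl)

lemma coeffI (p q : R2) :
    coeff (Finsupp.single 0 2) (p * X 0 ^ 2 + q * (X 0 * X 1)) = coeff 0 p := by
  rw [coeff_add, X_pow_eq_monomial, zw_eq, coeff_mul_monomial', coeff_mul_monomial',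
    if_pos le_rfl, if_neg not_le_zw0]
  simp

lemma coeffJ (p q : R2) :
    coeff (Finsupp.single 1 2) (p * X 1 ^ 2 + q * (X 0 * X 1)) = coeff 0 p := by
  rw [coeff_add, X_pow_eq_monomial, zw_eq, coeff_mul_monomial', coeff_mul_monomial',
    if_pos le_rfl, if_neg not_le_zw1]
  simp

def fI : (Ideal.span {(X 0 : R2) ^ 2, X 0 * X 1}) →ₗ[R2] CC where
  toFun x := CC.of (coeff (Finsupp.single 0 2) x.1)
  map_add' x y := congrArg CC.of (coeff_add _ _ _)
  map_smul' r x := by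
    obtain ⟨p, q, h⟩ := Ideal.mem_span_pair.mp x.2
    have h1 : ((r • x : _) : R2) = (r * p) * X 0 ^ 2 + (r * q) * (X 0 * X 1) := by
      rw [Submodule.coe_smul, smul_eq_mul, ← h]; ring
    have h2 : (x : R2) = p * X 0 ^ 2 + q * (X 0 * X 1) := h.symm
    show CC.of (coeff (Finsupp.single 0 2) ((r • x : Ideal.span _) : R2)) =
      r • CC.of (coeff (Finsupp.single 0 2) (x : R2))
    rw [CC.smul_def, h1, h2, coeffI, coeffI]
    show CC.of (constantCoeff (r * p)) = _
    rw [map_mul]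
    rfl

def fJ : (Ideal.span {(X 1 : R2) ^ 2, X 0 * X 1}) →ₗ[R2] CC where
  toFun x := CC.of (coeff (Finsupp.single 1 2) x.1)
  map_add' x y := congrArg CC.of (coeff_add _ _ _)
  map_smul' r x := by
    obtain ⟨p, q, h⟩ := Ideal.mem_span_pair.mp x.2
    have h1 : ((r • x : _) : R2) = (r * p) * X 1 ^ 2 + (r * q) * (X 0 * X 1) := by
      rw [Submodule.coe_smul, smul_eq_mul, ← h]; ring
    have h2 : (x : R2) = p * X 1 ^ 2 + q * (X 0 * X 1) := h.symm
    show CC.of (coeff (Finsupp.single 1 2) ((r • x : Ideal.span _) : R2)) =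
      r • CC.of (coeff (Finsupp.single 1 2) (x : R2))
    rw [CC.smul_def, h1, h2, coeffJ, coeffJ]
    show CC.of (constantCoeff (r * p)) = _
    rw [map_mul]
    rfl

def Bmap : (Ideal.span {(X 0 : R2) ^ 2, X 0 * X 1}) →ₗ[R2]
    (Ideal.span {(X 1 : R2) ^ 2, X 0 * X 1}) →ₗ[R2] CC :=
  LinearMap.mk₂ R2 (fun x y => fI x * fJ y)
    (fun x x' y => by show fI (x + x') * fJ y = fI x * fJ y + fI x' * fJ y
                      rw [map_add]; exact add_mul _ _ _)
    (fun r x y => by show fI (r • x) * fJ y = r • (fI x * fJ y)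
                     rw [map_smul, CC.smul_def, CC.smul_def]; exact mul_assoc _ _ _)
    (fun x y y' => by show fI x * fJ (y + y') = fI x * fJ y + fI x * fJ y'
                      rw [map_add]; exact mul_add _ _ _)
    (fun r x y => by show fI x * fJ (r • y) = r • (fI x * fJ y)
                     rw [map_smul, CC.smul_def, CC.smul_def]; ring)

lemma fI_z2 (h : (X 0 : R2) ^ 2 ∈ Ideal.span {(X 0 : R2) ^ 2, X 0 * X 1}) :
    fI ⟨X 0 ^ 2, h⟩ = CC.of 1 := by
  show CC.of (coeff (Finsupp.single 0 2) ((X 0 : R2) ^ 2)) = _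
  rw [X_pow_eq_monomial, coeff_monomial, if_pos rfl]

lemma fJ_w2 (h : (X 1 : R2) ^ 2 ∈ Ideal.span {(X 1 : R2) ^ 2, X 0 * X 1}) :
    fJ ⟨X 1 ^ 2, h⟩ = CC.of 1 := by
  show CC.of (coeff (Finsupp.single 1 2) ((X 1 : R2) ^ 2)) = _
  rw [X_pow_eq_monomial, coeff_monomial, if_pos rfl]

lemma fI_zw (h : (X 0 : R2) * X 1 ∈ Ideal.span {(X 0 : R2) ^ 2, X 0 * X 1}) :
    fI ⟨X 0 * X 1, h⟩ = CC.of 0 := by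
  show CC.of (coeff (Finsupp.single 0 2) ((X 0 : R2) * X 1)) = _
  rw [zw_eq, coeff_monomial, if_neg zwmon_ne0]

end Stmt3Aux

/- STATEMENT 3:
Over R = ℂ[z,w], with I = (z², zw) and J = (w², zw), the element
z² ⊗ w² − zw ⊗ zw of I ⊗_R J is nonzero but is annihilated by z;
hence I ⊗_R J is not torsion-free. -/
set_option synthInstance.maxHeartbeats 1000000 in
theorem stmt_3 (z w : MvPolynomial (Fin 2) ℂ)
    (hz : z = MvPolynomial.X 0) (hw : w = MvPolynomial.X 1)
    (I J : Ideal (MvPolynomial (Fin 2) ℂ))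
    (hI : I = Ideal.span {z ^ 2, z * w}) (hJ : J = Ideal.span {w ^ 2, z * w})
    (hz2 : z ^ 2 ∈ I) (hzwI : z * w ∈ I) (hw2 : w ^ 2 ∈ J) (hzwJ : z * w ∈ J) :
    ((⟨z ^ 2, hz2⟩ : I) ⊗ₜ[MvPolynomial (Fin 2) ℂ] (⟨w ^ 2, hw2⟩ : J)
        - (⟨z * w, hzwI⟩ : I) ⊗ₜ (⟨z * w, hzwJ⟩ : J) ≠ 0 ∧
      z • ((⟨z ^ 2, hz2⟩ : I) ⊗ₜ[MvPolynomial (Fin 2) ℂ] (⟨w ^ 2, hw2⟩ : J)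
        - (⟨z * w, hzwI⟩ : I) ⊗ₜ (⟨z * w, hzwJ⟩ : J)) = 0) ∧
    Submodule.torsion (MvPolynomial (Fin 2) ℂ) (I ⊗[MvPolynomial (Fin 2) ℂ] J) ≠ ⊥ := by
  subst hz hw hI hJ
  set A : (Ideal.span {(X 0 : R2) ^ 2, X 0 * X 1}) := ⟨X 0 ^ 2, hz2⟩ with hA
  set B : (Ideal.span {(X 1 : R2) ^ 2, X 0 * X 1}) := ⟨X 1 ^ 2, hw2⟩ with hB
  set C : (Ideal.span {(X 0 : R2) ^ 2, X 0 * X 1}) := ⟨X 0 * X 1, hzwI⟩ with hC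
  set D : (Ideal.span {(X 1 : R2) ^ 2, X 0 * X 1}) := ⟨X 0 * X 1, hzwJ⟩ with hD
  have hne : A ⊗ₜ[R2] B - C ⊗ₜ[R2] D ≠ 0 := by
    intro h0
    have h := congrArg (TensorProduct.lift Bmap) h0
    simp only [map_sub, map_zero, TensorProduct.lift.tmul] at h
    rw [show Bmap A B = fI A * fJ B from rfl, show Bmap C D = fI C * fJ D from rfl,
      hA, hB, hC, fI_z2, fJ_w2, fI_zw] at h
    rw [show CC.of 0 = (0 : CC) from rfl, zero_mul, sub_zero] at h
    have h2 : (1 * 1 : ℂ) = 0 := h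
    simp at h2
  have hzs : (X 0 : R2) • (A ⊗ₜ[R2] B - C ⊗ₜ[R2] D) = 0 := by
    have key : ((X 0 : R2) • A) ⊗ₜ[R2] B = ((X 0 : R2) • C) ⊗ₜ[R2] D := by
      rw [smul_tmul, show ((X 0 : R2) • B) = ((X 1 : R2) • D) from
        Subtype.ext (by show (X 0 : R2) * X 1 ^ 2 = (X 1 : R2) * (X 0 * X 1); ring)]
      rw [← smul_tmul, show ((X 1 : R2) • A) = ((X 0 : R2) • C) from
        Subtype.ext (by show (X 1 : R2) * X 0 ^ 2 = (X 0 : R2) * (X 0 * X 1); ring)]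
    rw [smul_sub, smul_tmul', smul_tmul', key, sub_self]
  refine ⟨⟨hne, hzs⟩, ?_⟩
  intro hbot
  apply hne
  have hmem : A ⊗ₜ[R2] B - C ⊗ₜ[R2] D ∈
      Submodule.torsion R2 ((Ideal.span {(X 0 : R2) ^ 2, X 0 * X 1}) ⊗[R2]
        (Ideal.span {(X 1 : R2) ^ 2, X 0 * X 1})) :=
    ⟨⟨X 0, mem_nonZeroDivisors_of_ne_zero (X_ne_zero 0)⟩, hzs⟩
  rw [hbot, Submodule.mem_bot] at hmem
  exact hmem
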